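/- If δ̂(a, a') = δ(a, a') for every pair of outcomes a, a', then f : V × B → A with fully private budgets is implementable if and only if the graph G_{f,B} contains no negative cycle. -/

import Mathlib

noncomputable section

open scoped Classical

variable {A : Type*} {N : Type*}

/-- minimum reported budget required to obtain outcome `a` -/
def beta (V : Set (A → ℝ)) (Bud : Set EReal) (f : (A → ℝ) → EReal → A) (a : A) : EReal :=
  sInf {B | B ∈ Bud ∧ ∃ v ∈ V, f v B = a}

/-- minimum reported value required to obtain outcome `a` -/
def omegaV (V : Set (A → ℝ)) (Bud : Set EReal) (f : (A → ℝ) → EReal → A) (a : A) : EReal :=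
  sInf {x : EReal | ∃ v ∈ V, ∃ B ∈ Bud, f v B = a ∧ x = ((v a : ℝ) : EReal)}

def theta (V : Set (A → ℝ)) (Bud : Set EReal) (f : (A → ℝ) → EReal → A) (a : A) : EReal :=
  min (beta V Bud f a) (omegaV V Bud f a)

def delta (V : Set (A → ℝ)) (Bud : Set EReal) (f : (A → ℝ) → EReal → A) (a a' : A) : EReal :=
  sInf {x : EReal | ∃ v ∈ V, ∃ B ∈ Bud, beta V Bud f a' ≤ B ∧ f v B = a ∧
    x = ((v a - v a' : ℝ) : EReal)}

def deltaHat (V : Set (A → ℝ)) (Bud : Set EReal) (f : (A → ℝ) → EReal → A) (a a' : A) : EReal :=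
  sInf {x : EReal | ∃ v ∈ V, ∃ B ∈ Bud, f v B = a ∧ x = ((v a - v a' : ℝ) : EReal)}

/-- arc length of the graph `G_{f,B}` -/
def glen (V : Set (A → ℝ)) (Bud : Set EReal) (f : (A → ℝ) → EReal → A) (a a' : A) : EReal :=
  min (delta V Bud f a a') (theta V Bud f a)

/-- arc length of the graph `Ĝ_{f,B}` -/
def glenHat (V : Set (A → ℝ)) (Bud : Set EReal) (f : (A → ℝ) → EReal → A) (a a' : A) : EReal :=
  min (deltaHat V Bud f a a') (theta V Bud f a)

/-- length of the closed walk through the nodes of the list `c` -/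
def cycLen (l : N → N → EReal) (c : List N) : EReal :=
  ((c.zip (c.rotate 1)).map fun pr => l pr.1 pr.2).sum

def NoNegCycle (l : N → N → EReal) : Prop :=
  ∀ c : List N, c ≠ [] → 0 ≤ cycLen l c

def pathLen (l : N → N → EReal) : List N → EReal
  | [] => 0
  | [_] => 0
  | x :: y :: t => l x y + pathLen l (y :: t)

/-- shortest-path distance from `i` to `k` in the complete graph with lengths `l` -/
def distG (l : N → N → EReal) (i k : N) : EReal :=
  sInf (pathLen l '' {c : List N | c.head? = some i ∧ c.getLast? = some k})

def Onto (V : Set (A → ℝ)) (Bud : Set EReal) (f : (A → ℝ) → EReal → A) : Prop :=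
  ∀ a : A, ∃ v ∈ V, ∃ B ∈ Bud, f v B = a

def NonnegV (V : Set (A → ℝ)) : Prop := ∀ v ∈ V, ∀ a, 0 ≤ v a

def NonnegB (Bud : Set EReal) : Prop := ∀ B ∈ Bud, 0 ≤ B

/-- `p` gives per-outcome prices implementing `f` : full incentive compatibility
(arbitrary misreports of value and budget), IR, BF and NPT. -/
def Implements (V : Set (A → ℝ)) (Bud : Set EReal) (f : (A → ℝ) → EReal → A)
    (p : A → ℝ) : Prop :=
  (∀ v ∈ V, ∀ B ∈ Bud, ∀ v' ∈ V, ∀ B' ∈ Bud,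
      ((p (f v' B') : ℝ) : EReal) ≤ B →
      v (f v' B') - p (f v' B') ≤ v (f v B) - p (f v B)) ∧
  (∀ v ∈ V, ∀ B ∈ Bud, p (f v B) ≤ v (f v B)) ∧
  (∀ v ∈ V, ∀ B ∈ Bud, ((p (f v B) : ℝ) : EReal) ≤ B) ∧
  (∀ v ∈ V, ∀ B ∈ Bud, 0 ≤ p (f v B))

/-- as `Implements`, but budget over-reporting is impossible: `B' ≤ B`. -/
def ImplementsNoOver (V : Set (A → ℝ)) (Bud : Set EReal) (f : (A → ℝ) → EReal → A)
    (p : A → ℝ) : Prop :=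
  (∀ v ∈ V, ∀ B ∈ Bud, ∀ v' ∈ V, ∀ B' ∈ Bud, B' ≤ B →
      ((p (f v' B') : ℝ) : EReal) ≤ B →
      v (f v' B') - p (f v' B') ≤ v (f v B) - p (f v B)) ∧
  (∀ v ∈ V, ∀ B ∈ Bud, p (f v B) ≤ v (f v B)) ∧
  (∀ v ∈ V, ∀ B ∈ Bud, ((p (f v B) : ℝ) : EReal) ≤ B) ∧
  (∀ v ∈ V, ∀ B ∈ Bud, 0 ≤ p (f v B))

/-- arcs of the augmented graph `H` : `none` is the special node `0`. -/
def HArc (d : A → A → EReal) : Option A → Option A → Prop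
  | some i, some k => d i k < ⊤
  | none, some _ => True
  | some _, none => True
  | none, none => False

/-- arc lengths of the augmented graph `H`. -/
def HLen (d : A → A → EReal) (t : A → EReal) : Option A → Option A → EReal
  | some i, some k => d i k
  | none, some _ => 0
  | some i, none => t i
  | none, none => 0

def NoNegCycleH (d : A → A → EReal) (t : A → EReal) : Prop :=
  ∀ c : List (Option A), c ≠ [] →
    (∀ pr ∈ c.zip (c.rotate 1), HArc d pr.1 pr.2) →
    0 ≤ cycLen (HLen d t) c

/-- shortest-path distance from node `i` to the special node `0` in `H`. -/
def distH (d : A → A → EReal) (t : A → EReal) (i : A) : EReal :=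
  sInf (pathLen (HLen d t) ''
    {c : List (Option A) | c.head? = some (some i) ∧ c.getLast? = some none ∧
      ∀ pr ∈ c.zip c.tail, HArc d pr.1 pr.2})


namespace S10

variable {A : Type*} {N : Type*}

lemma pathLen_cons_cons (l : N → N → EReal) (x y : N) (t : List N) :
    pathLen l (x :: y :: t) = l x y + pathLen l (y :: t) := rfl

lemma zip_rot_sum (l : N → N → EReal) :
    ∀ (t : List N) (x y : N),
    (((x :: t).zip (t ++ [y])).map fun pr => l pr.1 pr.2).sum
      = pathLen l (x :: t) + l ((x :: t).getLast (by simp)) y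
  | [], x, y => by simp [pathLen]
  | z :: t, x, y => by
    have ih := zip_rot_sum l t z y
    simp only [List.cons_append, List.zip_cons_cons, List.map_cons, List.sum_cons,
      pathLen_cons_cons] at *
    rw [ih, List.getLast_cons (by simp : z :: t ≠ []), add_assoc]

lemma cycLen_cons (l : N → N → EReal) (x : N) (t : List N) :
    cycLen l (x :: t) = pathLen l (x :: t) + l ((x :: t).getLast (by simp)) x := by
  unfold cycLen
  rw [show (x :: t).rotate 1 = t ++ [x] by simp [List.rotate_cons_succ]]
  exact zip_rot_sum l t x x

lemma tele (g : N → ℝ) :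
    ∀ (t : List N) (x y : N),
    (((x :: t).zip (t ++ [y])).map fun pr => ((g pr.1 - g pr.2 : ℝ) : EReal)).sum
      = ((g x - g y : ℝ) : EReal)
  | [], x, y => by simp
  | z :: t, x, y => by
    simp only [List.cons_append, List.zip_cons_cons, List.map_cons, List.sum_cons]
    rw [tele g t z y, ← EReal.coe_add]
    norm_num

lemma pathLen_append (l : N → N → EReal) :
    ∀ (xs : List N) (y : N) (ys : List N),
    pathLen l (xs ++ y :: ys) = pathLen l (xs ++ [y]) + pathLen l (y :: ys)
  | [], y, ys => by simp [pathLen]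
  | [x], y, ys => by
    simp only [List.cons_append, List.nil_append, pathLen_cons_cons]
    show l x y + pathLen l (y :: ys) = pathLen l [x, y] + pathLen l (y :: ys)
    simp [pathLen]
  | x :: x2 :: xs, y, ys => by
    have ih := pathLen_append l (x2 :: xs) y ys
    simp only [List.cons_append, pathLen_cons_cons] at *
    rw [ih, add_assoc]

lemma HLen_none_left (d : A → A → EReal) (t : A → EReal) (o : Option A) :
    HLen d t none o = 0 := by cases o <;> rfl

lemma pathLen_none_cons (d : A → A → EReal) (t : A → EReal) (rest : List (Option A)) :
    pathLen (HLen d t) (none :: rest) = pathLen (HLen d t) rest := by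
  cases rest with
  | nil => rfl
  | cons o rs => rw [pathLen_cons_cons, HLen_none_left, zero_add]

lemma pathLen_map_some (d : A → A → EReal) (t : A → EReal) :
    ∀ (L : List A) (hL : L ≠ []),
    pathLen (HLen d t) (L.map some ++ [none]) = pathLen d L + t (L.getLast hL)
  | [], hL => absurd rfl hL
  | [a], _ => by simp [pathLen, HLen]
  | a :: b :: L, _ => by
    have ih := pathLen_map_some d t (b :: L) (by simp)
    simp only [List.map_cons, List.cons_append, pathLen_cons_cons] at *
    rw [ih, List.getLast_cons (by simp : b :: L ≠ []), ← add_assoc]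
    rfl

lemma decomp : ∀ (c : List (Option A)), c.getLast? = some none →
    ∃ (L : List A) (rest : List (Option A)), c = L.map some ++ none :: rest
  | [], h => by simp at h
  | (none :: c'), _ => ⟨[], c', rfl⟩
  | (some a :: c'), h => by
    match c', h with
    | [], h => simp at h
    | (o :: c''), h =>
      obtain ⟨L, rest, hrw⟩ := decomp (o :: c'') (by rwa [List.getLast?_cons_cons] at h)
      exact ⟨a :: L, rest, by rw [List.map_cons, List.cons_append, hrw]⟩

/-- nonnegativity of every `H`-path ending at the special node, given no negative
cycle in `G` and `d ≤ t`. -/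
lemma Hpath_nonneg (d : A → A → EReal) (t : A → EReal)
    (hnc : NoNegCycle d) (hdt : ∀ a a', d a a' ≤ t a) :
    ∀ (n : ℕ) (c : List (Option A)), c.length ≤ n → c.getLast? = some none →
      0 ≤ pathLen (HLen d t) c := by
  intro n
  induction n with
  | zero =>
    intro c hc hlast
    rw [Nat.le_zero, List.length_eq_zero_iff] at hc
    subst hc; simp at hlast
  | succ n ih =>
    intro c hc hlast
    obtain ⟨L, rest, rfl⟩ := decomp c hlast
    have hrest : 0 ≤ pathLen (HLen d t) rest := by
      cases rest with
      | nil => simp [pathLen]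
      | cons o rs =>
        refine ih _ ?_ ?_
        · have := hc; simp [List.length_append] at this ⊢; omega
        · rw [List.getLast?_append_of_ne_nil _ (by simp)] at hlast
          rwa [show (none :: o :: rs).getLast? = (o :: rs).getLast? from
            List.getLast?_cons_cons] at hlast
    cases L with
    | nil =>
      simpa [pathLen_none_cons] using hrest
    | cons x L' =>
      rw [pathLen_append (HLen d t) ((x :: L').map some) none rest,
        pathLen_none_cons,
        pathLen_map_some d t (x :: L') (by simp)]
      have hseg : 0 ≤ pathLen d (x :: L') + t ((x :: L').getLast (by simp)) := by
        have h1 : 0 ≤ cycLen d (x :: L') := hnc _ (by simp)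
        rw [cycLen_cons] at h1
        exact le_trans h1 (add_le_add_right (hdt _ _) _)
      exact add_nonneg hseg hrest

end S10

/-- If `δ̂ = δ` everywhere, then `f` with fully private budgets is
implementable iff `G_{f,B}` contains no negative cycle. -/
theorem stmt10 {A : Type*} (V : Set (A → ℝ)) (Bud : Set EReal)
    (f : (A → ℝ) → EReal → A)
    (hV : NonnegV V) (hB : NonnegB Bud) (honto : Onto V Bud f)
    (hdelta : ∀ a a' : A, deltaHat V Bud f a a' = delta V Bud f a a') :
    (∃ p : A → ℝ, Implements V Bud f p) ↔ NoNegCycle (glen V Bud f) := by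
  -- common facts
  have homega_le : ∀ (a : A) (v : A → ℝ), v ∈ V → ∀ B ∈ Bud, f v B = a →
      omegaV V Bud f a ≤ ((v a : ℝ) : EReal) := by
    intro a v hv B hBm hf
    exact sInf_le ⟨v, hv, B, hBm, hf, rfl⟩
  have homega_lt_top : ∀ a, omegaV V Bud f a < ⊤ := by
    intro a
    obtain ⟨v, hv, B, hBm, hf⟩ := honto a
    exact lt_of_le_of_lt (homega_le a v hv B hBm hf) (EReal.coe_lt_top _)
  have hbeta_le : ∀ (a : A) (v : A → ℝ), v ∈ V → ∀ B ∈ Bud, f v B = a →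
      beta V Bud f a ≤ B := fun a v hv B hBm hf => sInf_le ⟨hBm, v, hv, hf⟩
  have htheta_le_omega : ∀ a, theta V Bud f a ≤ omegaV V Bud f a := fun a => min_le_right _ _
  have htheta_le_beta : ∀ a, theta V Bud f a ≤ beta V Bud f a := fun a => min_le_left _ _
  have htheta_lt_top : ∀ a, theta V Bud f a < ⊤ := fun a =>
    lt_of_le_of_lt (htheta_le_omega a) (homega_lt_top a)
  have hglen_le_theta : ∀ a a', glen V Bud f a a' ≤ theta V Bud f a :=
    fun a a' => min_le_right _ _
  have hglen_lt_top : ∀ a a', glen V Bud f a a' < ⊤ := fun a a' =>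
    lt_of_le_of_lt (hglen_le_theta a a') (htheta_lt_top a)
  have hglen_le : ∀ (a a' : A) (v : A → ℝ), v ∈ V → ∀ B ∈ Bud, f v B = a →
      glen V Bud f a a' ≤ ((v a - v a' : ℝ) : EReal) := by
    intro a a' v hv B hBm hf
    calc glen V Bud f a a' ≤ delta V Bud f a a' := min_le_left _ _
      _ = deltaHat V Bud f a a' := (hdelta a a').symm
      _ ≤ _ := sInf_le ⟨v, hv, B, hBm, hf, rfl⟩
  constructor
  · -- necessity
    rintro ⟨p, hIC, hIR, hBF, hNPT⟩
    have hp_beta : ∀ (a : A), ((p a : ℝ) : EReal) ≤ beta V Bud f a := by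
      intro a
      refine le_sInf ?_
      rintro B ⟨hBm, v, hv, hf⟩
      have := hBF v hv B hBm; rwa [hf] at this
    have hp_omega : ∀ a, ((p a : ℝ) : EReal) ≤ omegaV V Bud f a := by
      intro a
      refine le_sInf ?_
      rintro x ⟨v, hv, B, hBm, hf, rfl⟩
      have := hIR v hv B hBm; rw [hf] at this
      exact_mod_cast this
    have hp_nonneg : ∀ a, 0 ≤ p a := by
      intro a
      obtain ⟨v, hv, B, hBm, hf⟩ := honto a
      have := hNPT v hv B hBm; rwa [hf] at this
    have hkey : ∀ a a', ((p a - p a' : ℝ) : EReal) ≤ glen V Bud f a a' := by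
      intro a a'
      refine le_min (le_sInf ?_) ?_
      · rintro x ⟨v, hv, B, hBm, hba, hf, rfl⟩
        obtain ⟨v', hv', B', hBm', hf'⟩ := honto a'
        have hcon : ((p (f v' B') : ℝ) : EReal) ≤ B := by
          rw [hf']; exact le_trans (hp_beta a') hba
        have h5 := hIC v hv B hBm v' hv' B' hBm' hcon
        rw [hf, hf'] at h5
        exact_mod_cast (by linarith : p a - p a' ≤ v a - v a')
      · have h1 : ((p a - p a' : ℝ) : EReal) ≤ ((p a : ℝ) : EReal) := by
          exact_mod_cast (by linarith [hp_nonneg a'] : p a - p a' ≤ p a)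
        exact le_trans h1 (le_min (hp_beta a) (hp_omega a))
    intro c hc
    obtain ⟨x, tl, rfl⟩ := List.exists_cons_of_ne_nil hc
    unfold cycLen
    rw [show (x :: tl).rotate 1 = tl ++ [x] by simp [List.rotate_cons_succ]]
    have hsum : (((x :: tl).zip (tl ++ [x])).map
          fun pr => ((p pr.1 - p pr.2 : ℝ) : EReal)).sum
        ≤ (((x :: tl).zip (tl ++ [x])).map fun pr => glen V Bud f pr.1 pr.2).sum := by
      apply List.sum_le_sum
      rintro pr _
      exact hkey pr.1 pr.2
    rw [S10.tele p tl x x] at hsum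
    simpa using hsum
  · -- sufficiency
    intro hnc
    have hglen_ne_bot : ∀ a a', glen V Bud f a a' ≠ ⊥ := by
      intro a a' hbot
      have h2 : 0 ≤ cycLen (glen V Bud f) [a, a'] := hnc _ (by simp)
      unfold cycLen at h2
      rw [show ([a, a'] : List A).rotate 1 = [a', a] by
        simp [List.rotate_cons_succ]] at h2
      simp only [List.zip_cons_cons, List.zip_nil_right, List.map_cons, List.map_nil,
        List.sum_cons, List.sum_nil, hbot, EReal.bot_add] at h2
      exact absurd h2 (by simp)
    set D := distH (glen V Bud f) (theta V Bud f) with hD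
    have hD_le_theta : ∀ a, D a ≤ theta V Bud f a := by
      intro a
      apply sInf_le
      refine ⟨[some a, none], ⟨rfl, rfl, ?_⟩, ?_⟩
      · rintro pr hpr
        simp only [List.tail_cons, List.zip_cons_cons, List.zip_nil_right,
          List.mem_singleton] at hpr
        subst hpr
        trivial
      · show HLen (glen V Bud f) (theta V Bud f) (some a) none + pathLen _ [none] = _
        show theta V Bud f a + 0 = _
        rw [add_zero]
    have hD_nonneg : ∀ a, 0 ≤ D a := by
      intro a
      refine le_sInf ?_
      rintro x ⟨c, ⟨_, hl, -⟩, rfl⟩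
      exact S10.Hpath_nonneg _ _ hnc hglen_le_theta c.length c le_rfl hl
    have hD_ne_top : ∀ a, D a ≠ ⊤ := fun a =>
      (lt_of_le_of_lt (hD_le_theta a) (htheta_lt_top a)).ne
    have hD_ne_bot : ∀ a, D a ≠ ⊥ := fun a =>
      (lt_of_lt_of_le (by simp : (⊥ : EReal) < 0) (hD_nonneg a)).ne'
    have htriangle : ∀ a a', D a ≤ glen V Bud f a a' + D a' := by
      intro a a'
      have h1 : ∀ x ∈ pathLen (HLen (glen V Bud f) (theta V Bud f)) ''
          {c : List (Option A) | c.head? = some (some a') ∧ c.getLast? = some none ∧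
            ∀ pr ∈ c.zip c.tail, HArc (glen V Bud f) pr.1 pr.2},
          D a ≤ glen V Bud f a a' + x := by
        rintro x ⟨c, ⟨hh, hl, harc⟩, rfl⟩
        obtain ⟨o, tl, rfl⟩ : ∃ o tl, c = o :: tl := by
          cases c with
          | nil => simp at hh
          | cons o tl => exact ⟨o, tl, rfl⟩
        have ho : o = some a' := by simpa using hh
        subst ho
        apply sInf_le
        refine ⟨some a :: some a' :: tl, ⟨rfl, ?_, ?_⟩, ?_⟩
        · rw [List.getLast?_cons_cons]; exact hl
        · rintro pr hpr
          simp only [List.tail_cons, List.zip_cons_cons, List.mem_cons] at hpr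
          rcases hpr with rfl | hpr
          · exact hglen_lt_top a a'
          · exact harc pr hpr
        · show HLen (glen V Bud f) (theta V Bud f) (some a) (some a') +
            pathLen _ (some a' :: tl) = _
          rfl
      have h2 : D a - glen V Bud f a a' ≤ D a' := by
        refine le_sInf ?_
        intro x hx
        rw [EReal.sub_le_iff_le_add (Or.inl (hglen_ne_bot a a'))
          (Or.inl (hglen_lt_top a a').ne), add_comm]
        exact h1 x hx
      rw [EReal.sub_le_iff_le_add (Or.inl (hglen_ne_bot a a'))
        (Or.inl (hglen_lt_top a a').ne)] at h2
      rwa [add_comm] at h2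
    have hcoe : ∀ a, (((D a).toReal : ℝ) : EReal) = D a := fun a =>
      EReal.coe_toReal (hD_ne_top a) (hD_ne_bot a)
    refine ⟨fun a => (D a).toReal, ?_, ?_, ?_, ?_⟩
    · intro v hv B hBm v' hv' B' hBm' _
      have h3 : D (f v B) ≤ ((v (f v B) - v (f v' B') : ℝ) : EReal) + D (f v' B') :=
        le_trans (htriangle (f v B) (f v' B'))
          (add_le_add_left (hglen_le (f v B) (f v' B') v hv B hBm rfl) _)
      rw [← hcoe (f v B), ← hcoe (f v' B'), ← EReal.coe_add] at h3
      have h4 : (D (f v B)).toReal ≤ v (f v B) - v (f v' B') + (D (f v' B')).toReal := by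
        exact_mod_cast h3
      linarith
    · intro v hv B hBm
      have h3 : D (f v B) ≤ ((v (f v B) : ℝ) : EReal) :=
        le_trans (hD_le_theta _) (le_trans (htheta_le_omega _)
          (homega_le _ v hv B hBm rfl))
      rw [← hcoe (f v B)] at h3
      exact_mod_cast h3
    · intro v hv B hBm
      calc (((D (f v B)).toReal : ℝ) : EReal) = D (f v B) := hcoe _
        _ ≤ theta V Bud f (f v B) := hD_le_theta _
        _ ≤ beta V Bud f (f v B) := htheta_le_beta _
        _ ≤ B := hbeta_le _ v hv B hBm rfl
    · intro v hv B hBm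
      simpa using EReal.toReal_le_toReal (hD_nonneg (f v B)) (by simp) (hD_ne_top _)
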